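/- Let L ≥ μ > 0, set κ = L/μ, let τ ≥ 0, and let γ satisfy 2 ≤ γ ≤ 8κ. Define η_t = 2/(μ(γ+t)) for t ≥ 0. If the nonnegative real sequence (Δ_t)_{t≥0} satisfies Δ_{t+1} ≤ (1 − μη_t)Δ_t + η_t² τ for all t ≥ 0, then for every T ≥ 0, Δ_T ≤ max{4τ/μ², γΔ_0}/(γ+T), and consequently (L/2)·Δ_T ≤ (2κ/(γ+T))·(τ/μ + 2LΔ_0). -/

import Mathlib

/-- The deterministic recursion with step size `η t = 2/(μ(γ+t))`
underlying Theorems 2 and 4. With `L ≥ μ > 0`, `κ = L/μ`, `τ ≥ 0` and `2 ≤ γ ≤ 8κ`,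
if `Δ (t+1) ≤ (1 − μ η t) Δ t + (η t)² τ` for all `t`, then for every `T`,
`Δ T ≤ max (4τ/μ²) (γ Δ 0) / (γ + T)` and consequently
`(L/2) Δ T ≤ (2κ/(γ+T)) (τ/μ + 2 L Δ 0)`. -/
theorem fedavg_explicit_stepsize_recursion
    (L μ κ τ γ : ℝ) (hμ : 0 < μ) (hL : μ ≤ L) (hκ : κ = L / μ) (hτ : 0 ≤ τ)
    (hγ2 : 2 ≤ γ) (hγ8 : γ ≤ 8 * κ)
    (η : ℕ → ℝ) (hη : ∀ t : ℕ, η t = 2 / (μ * (γ + (t : ℝ))))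
    (Δ : ℕ → ℝ) (hΔ : ∀ t : ℕ, 0 ≤ Δ t)
    (hrec : ∀ t : ℕ, Δ (t + 1) ≤ (1 - μ * η t) * Δ t + (η t) ^ 2 * τ) :
    ∀ T : ℕ,
      Δ T ≤ max (4 * τ / μ ^ 2) (γ * Δ 0) / (γ + (T : ℝ)) ∧
      L / 2 * Δ T ≤ 2 * κ / (γ + (T : ℝ)) * (τ / μ + 2 * L * Δ 0) := by
  have hγ0 : (0:ℝ) < γ := by linarith
  have hL0 : (0:ℝ) < L := lt_of_lt_of_le hμ hL
  set v := max (4 * τ / μ ^ 2) (γ * Δ 0) with hv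
  have hv0 : (0:ℝ) ≤ v := le_trans (by positivity) (le_max_left _ _)
  have hτv : 4 * τ / μ ^ 2 ≤ v := le_max_left _ _
  have key : ∀ T : ℕ, Δ T ≤ v / (γ + (T : ℝ)) := by
    intro T
    induction T with
    | zero =>
      simp only [Nat.cast_zero, add_zero]
      rw [le_div_iff₀ hγ0, mul_comm]
      exact le_max_right _ _
    | succ t ih =>
      have hx : (2:ℝ) ≤ γ + t := by
        have : (0:ℝ) ≤ t := Nat.cast_nonneg t
        linarith
      have hx0 : (0:ℝ) < γ + t := by linarith
      have hx1 : (0:ℝ) < γ + ((t:ℝ) + 1) := by linarith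
      have hηt : η t = 2 / (μ * (γ + t)) := hη t
      have hcoef : 1 - μ * η t = 1 - 2 / (γ + (t:ℝ)) := by
        rw [hηt]; field_simp
      have hcoef0 : 0 ≤ 1 - μ * η t := by
        rw [hcoef]
        have : 2 / (γ + (t:ℝ)) ≤ 1 := by rw [div_le_one hx0]; linarith
        linarith
      have h1 : Δ (t+1) ≤ (1 - 2/(γ+(t:ℝ))) * (v/(γ+(t:ℝ))) + (2/(μ*(γ+(t:ℝ))))^2 * τ := by
        calc Δ (t+1) ≤ (1 - μ * η t) * Δ t + (η t)^2 * τ := hrec t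
          _ ≤ (1 - μ * η t) * (v/(γ+(t:ℝ))) + (η t)^2 * τ := by gcongr
          _ = (1 - 2/(γ+(t:ℝ))) * (v/(γ+(t:ℝ))) + (2/(μ*(γ+(t:ℝ))))^2 * τ := by
              rw [hcoef, hηt]
      have hA : (2/(μ*(γ+(t:ℝ))))^2 * τ = (4*τ/μ^2) / (γ+(t:ℝ))^2 := by
        field_simp; ring
      have h3 : (4*τ/μ^2)/(γ+(t:ℝ))^2 ≤ v/(γ+(t:ℝ))^2 := by gcongr
      have heq : (1 - 2/(γ+(t:ℝ))) * (v/(γ+(t:ℝ))) + v/(γ+(t:ℝ))^2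
          = ((γ+(t:ℝ)) - 1) * v / (γ+(t:ℝ))^2 := by
        field_simp; ring
      have h4 : ((γ+(t:ℝ)) - 1) * v / (γ+(t:ℝ))^2 ≤ v / (γ+((t:ℝ)+1)) := by
        rw [div_le_div_iff₀ (by positivity) hx1]
        nlinarith [mul_nonneg hv0 (le_of_lt hx0)]
      push_cast
      calc Δ (t+1) ≤ (1 - 2/(γ+(t:ℝ))) * (v/(γ+(t:ℝ))) + (2/(μ*(γ+(t:ℝ))))^2 * τ := h1
        _ ≤ (1 - 2/(γ+(t:ℝ))) * (v/(γ+(t:ℝ))) + v/(γ+(t:ℝ))^2 := by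
            rw [hA]; linarith
        _ = ((γ+(t:ℝ)) - 1) * v / (γ+(t:ℝ))^2 := heq
        _ ≤ v / (γ+((t:ℝ)+1)) := h4
  intro T
  have hT0 : (0:ℝ) < γ + (T:ℝ) := by
    have : (0:ℝ) ≤ T := Nat.cast_nonneg T
    linarith
  refine ⟨key T, ?_⟩
  have hb : L/2 * v ≤ 2 * κ * (τ/μ + 2 * L * Δ 0) := by
    have hΔ0 := hΔ 0
    have e1 : L/2 * (4*τ/μ^2) ≤ 2 * κ * (τ/μ + 2 * L * Δ 0) := by
      rw [hκ]
      have heq : 2 * (L/μ) * (τ/μ) = L/2 * (4*τ/μ^2) := by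
        field_simp; ring
      have hpos : 0 ≤ 2 * (L/μ) * (2 * L * Δ 0) := by positivity
      nlinarith
    have e2 : L/2 * (γ * Δ 0) ≤ 2 * κ * (τ/μ + 2 * L * Δ 0) := by
      rw [hκ]
      have h8 : L/2 * (γ * Δ 0) ≤ L/2 * (8 * (L/μ) * Δ 0) := by
        have : γ * Δ 0 ≤ 8 * (L/μ) * Δ 0 := by
          have := hγ8; rw [hκ] at this; nlinarith
        nlinarith
      have heq : L/2 * (8 * (L/μ) * Δ 0) = 2 * (L/μ) * (2 * L * Δ 0) := by
        field_simp; ring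
      have hpos : 0 ≤ 2 * (L/μ) * (τ/μ) := by positivity
      nlinarith
    rcases max_cases (4 * τ / μ ^ 2) (γ * Δ 0) with ⟨h, _⟩ | ⟨h, _⟩ <;>
      rw [hv, h] <;> assumption
  calc L/2 * Δ T ≤ L/2 * (v / (γ + (T:ℝ))) := by
        have := key T; nlinarith
    _ = (L/2 * v) / (γ + (T:ℝ)) := by ring
    _ ≤ (2 * κ * (τ/μ + 2 * L * Δ 0)) / (γ + (T:ℝ)) := by gcongr
    _ = 2 * κ / (γ + (T:ℝ)) * (τ/μ + 2 * L * Δ 0) := by ring
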